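/- Let M > 1, c = 2M/(M + 1), and let k₀, Θ₁, Θ₂ be the 2π-periodic functions defined by: k₀(θ) = 1 for θ ∈ [0, cπ/2) ∪ [π, π + cπ/2) and k₀(θ) = M otherwise on [0, 2π); Θ₁(θ) = sin(c⁻¹θ − π/4) on [0, cπ/2), Θ₁(θ) = cos(c⁻¹M(θ − cπ/2) − π/4) on [cπ/2, π), Θ₁(θ) = −sin(c⁻¹(θ − π) − π/4) on [π, π + cπ/2), Θ₁(θ) = −cos(c⁻¹M(θ − π − cπ/2) − π/4) on [π + cπ/2, 2π); Θ₂(θ) = −cos(c⁻¹θ − π/4) on [0, cπ/2), Θ₂(θ) = sin(c⁻¹M(θ − cπ/2) − π/4) on [cπ/2, π), Θ₂(θ) = cos(c⁻¹(θ − π) − π/4) on [π, π + cπ/2), Θ₂(θ) = −sin(c⁻¹M(θ − π − cπ/2) − π/4) on [π + cπ/2, 2π). Define f₀(z) = |z|^{1/c} (Θ₁(arg z) + i Θ₂(arg z)) and μ₀(z) = ((1 − k₀(arg z))/(1 + k₀(arg z))) z z̄⁻¹ for z ≠ 0, where arg z ∈ [0, 2π). Then for every z ≠ 0 whose argument arg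 z ∈ [0, 2π) does not lie in {0, cπ/2, π, π + cπ/2}, f₀ is differentiable at z in the real sense and satisfies the Beltrami equation ∂̄f₀(z) = μ₀(z) ∂f₀(z). -/

import Mathlib

open Real Set

/-- The argument of a nonzero complex number, normalized to lie in `[0, 2π)`. -/
noncomputable def arg2pi (z : ℂ) : ℝ :=
  if 0 ≤ Complex.arg z then Complex.arg z else Complex.arg z + 2 * π

/-- The Wirtinger derivative `∂̄f(z) = (1/2)(∂f/∂x + i ∂f/∂y)` of a map `f : ℂ → ℂ`
viewed as real-differentiable at `z`. -/
noncomputable def wirtingerBar (f : ℂ → ℂ) (z : ℂ) : ℂ :=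
  (1 / 2) * (fderiv ℝ f z 1 + Complex.I * fderiv ℝ f z Complex.I)

/-- The Wirtinger derivative `∂f(z) = (1/2)(∂f/∂x − i ∂f/∂y)`. -/
noncomputable def wirtinger (f : ℂ → ℂ) (z : ℂ) : ℂ :=
  (1 / 2) * (fderiv ℝ f z 1 - Complex.I * fderiv ℝ f z Complex.I)

lemma arg2pi_nonneg (z : ℂ) : 0 ≤ arg2pi z := by
  unfold arg2pi
  split
  · assumption
  · nlinarith [Complex.neg_pi_lt_arg z, Real.pi_pos]

lemma arg2pi_lt (z : ℂ) : arg2pi z < 2 * π := by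
  unfold arg2pi
  split
  · nlinarith [Complex.arg_le_pi z, Real.pi_pos]
  · linarith [show ¬ (0:ℝ) ≤ Complex.arg z from by assumption]

lemma sector_up {z : ℂ} (hz : z ≠ 0) {lo hi : ℝ} (hlo : 0 ≤ lo) (hhi : hi ≤ π)
    (h1 : lo < arg2pi z) (h2 : arg2pi z < hi) :
    z ∈ Complex.slitPlane ∧
    ∀ᶠ w in nhds z, w ≠ 0 ∧ Complex.arg w ∈ Ioo lo hi ∧ arg2pi w = Complex.arg w := by
  have hpos : 0 ≤ Complex.arg z := by
    by_contra h
    have : arg2pi z = Complex.arg z + 2 * π := if_neg h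
    nlinarith [Complex.neg_pi_lt_arg z, Real.pi_pos]
  have he : arg2pi z = Complex.arg z := if_pos hpos
  have hargmem : Complex.arg z ∈ Ioo lo hi := ⟨he ▸ h1, he ▸ h2⟩
  have hne : Complex.arg z ≠ π := by
    intro h; rw [h] at hargmem; linarith [hargmem.2]
  have hsl : z ∈ Complex.slitPlane := Complex.mem_slitPlane_iff_arg.mpr ⟨hne, hz⟩
  refine ⟨hsl, ?_⟩
  have hcont := Complex.continuousAt_arg hsl
  have hIoo : ∀ᶠ w in nhds z, Complex.arg w ∈ Ioo lo hi :=
    hcont.preimage_mem_nhds (isOpen_Ioo.mem_nhds hargmem)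
  filter_upwards [hIoo, eventually_ne_nhds hz] with w hw hw0
  exact ⟨hw0, hw, if_pos (le_trans hlo hw.1.le)⟩

lemma sector_down {z : ℂ} (hz : z ≠ 0) {lo hi : ℝ} (hlo : π ≤ lo) (hhi : hi ≤ 2 * π)
    (h1 : lo < arg2pi z) (h2 : arg2pi z < hi) :
    z ∈ Complex.slitPlane ∧
    ∀ᶠ w in nhds z, w ≠ 0 ∧ Complex.arg w ∈ Ioo (lo - 2 * π) (hi - 2 * π) ∧
      arg2pi w = Complex.arg w + 2 * π := by
  have hneg : ¬ 0 ≤ Complex.arg z := by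
    intro h
    have : arg2pi z = Complex.arg z := if_pos h
    nlinarith [Complex.arg_le_pi z]
  have he : arg2pi z = Complex.arg z + 2 * π := if_neg hneg
  have hargmem : Complex.arg z ∈ Ioo (lo - 2 * π) (hi - 2 * π) := by
    constructor <;> [linarith [he ▸ h1]; linarith [he ▸ h2]]
  have hne : Complex.arg z ≠ π := by
    intro h; rw [h] at hargmem; linarith [hargmem.2, Real.pi_pos]
  have hsl : z ∈ Complex.slitPlane := Complex.mem_slitPlane_iff_arg.mpr ⟨hne, hz⟩
  refine ⟨hsl, ?_⟩
  have hcont := Complex.continuousAt_arg hsl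
  have hIoo : ∀ᶠ w in nhds z, Complex.arg w ∈ Ioo (lo - 2 * π) (hi - 2 * π) :=
    hcont.preimage_mem_nhds (isOpen_Ioo.mem_nhds hargmem)
  filter_upwards [hIoo, eventually_ne_nhds hz] with w hw hw0
  refine ⟨hw0, hw, if_neg ?_⟩
  have := hw.2
  intro h; linarith

lemma exp_I_eq (x : ℝ) : Complex.exp ((x : ℂ) * Complex.I)
    = (↑(Real.cos x) : ℂ) + ↑(Real.sin x) * Complex.I := by
  rw [Complex.exp_mul_I, ← Complex.ofReal_cos, ← Complex.ofReal_sin]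

lemma pointwise (s t κ : ℝ) (w : ℂ) (hw : w ≠ 0) :
    (↑(‖w‖ ^ s) : ℂ) * Complex.exp (↑(κ + t * Complex.arg w) * Complex.I)
      = Complex.exp ((κ : ℂ) * Complex.I) *
        Complex.exp (↑((s + t) / 2) * Complex.log w
          + ↑((s - t) / 2) * (starRingEnd ℂ) (Complex.log w)) := by
  have habs : (0 : ℝ) < ‖w‖ := norm_pos_iff.mpr hw
  rw [Real.rpow_def_of_pos habs, Complex.ofReal_exp, ← Complex.exp_add, ← Complex.exp_add]
  congr 1
  simp only [Complex.log, map_add, map_mul, Complex.conj_ofReal, Complex.conj_I]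
  push_cast
  ring

lemma master (p q : ℝ) (K z : ℂ) (hsl : z ∈ Complex.slitPlane) (hz0 : z ≠ 0)
    (f₀ : ℂ → ℂ)
    (hev : f₀ =ᶠ[nhds z] fun w => K * Complex.exp ((p:ℂ) * Complex.log w
        + (q:ℂ) * (starRingEnd ℂ) (Complex.log w))) :
    DifferentiableAt ℝ f₀ z ∧
    wirtingerBar f₀ z = f₀ z * q * ((starRingEnd ℂ) z)⁻¹ ∧
    wirtinger f₀ z = f₀ z * p * z⁻¹ := by
  set g : ℂ → ℂ := fun w => K * Complex.exp ((p:ℂ) * Complex.log w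
        + (q:ℂ) * (starRingEnd ℂ) (Complex.log w)) with hg
  have hD : HasFDerivAt Complex.log
      (((1 : ℂ →L[ℂ] ℂ).smulRight z⁻¹).restrictScalars ℝ) z :=
    (Complex.hasDerivAt_log hsl).hasFDerivAt.restrictScalars ℝ
  set D := ((1 : ℂ →L[ℂ] ℂ).smulRight z⁻¹).restrictScalars ℝ with hDdef
  have hA : HasFDerivAt (fun w => (p:ℂ) * Complex.log w) ((p:ℂ) • D) z := hD.const_mul _
  have hconj : HasFDerivAt (fun w => (starRingEnd ℂ) (Complex.log w))
      ((Complex.conjCLE.toContinuousLinearMap).comp D) z :=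
    (Complex.conjCLE.toContinuousLinearMap.hasFDerivAt).comp z hD
  have hB : HasFDerivAt (fun w => (q:ℂ) * (starRingEnd ℂ) (Complex.log w))
      ((q:ℂ) • ((Complex.conjCLE.toContinuousLinearMap).comp D)) z := hconj.const_mul _
  have hS := hA.add hB
  set u : ℂ := (p:ℂ) * Complex.log z + (q:ℂ) * (starRingEnd ℂ) (Complex.log z) with hu
  have hexp : HasFDerivAt Complex.exp
      (((1 : ℂ →L[ℂ] ℂ).smulRight (Complex.exp u)).restrictScalars ℝ) u :=
    (Complex.hasDerivAt_exp u).hasFDerivAt.restrictScalars ℝ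
  have hcomp := hexp.comp z hS
  have hgd := hcomp.const_mul K
  have hgd' : HasFDerivAt g _ z := hgd
  have hfg : fderiv ℝ f₀ z = fderiv ℝ g z := hev.fderiv_eq
  have hdiff : DifferentiableAt ℝ f₀ z :=
    (hgd'.differentiableAt).congr_of_eventuallyEq hev
  have hf0z : f₀ z = K * Complex.exp u := hev.self_of_nhds
  have e1 : fderiv ℝ f₀ z 1 = K * (Complex.exp u * ((p:ℂ) * z⁻¹ + (q:ℂ) * (starRingEnd ℂ) z⁻¹)) := by
    rw [hfg, hgd'.fderiv]
    simp [D, mul_comm]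
    ring
  have eI : fderiv ℝ f₀ z Complex.I
      = K * (Complex.exp u * ((p:ℂ) * (Complex.I * z⁻¹) + (q:ℂ) * (starRingEnd ℂ) (Complex.I * z⁻¹))) := by
    rw [hfg, hgd'.fderiv]
    simp [D, mul_comm]
    ring
  refine ⟨hdiff, ?_, ?_⟩
  · rw [wirtingerBar, e1, eI, hf0z]
    simp only [map_mul, map_inv₀, Complex.conj_I]
    field_simp
    ring_nf
    simp only [Complex.I_sq]
    ring
  · rw [wirtinger, e1, eI, hf0z]
    simp only [map_mul, map_inv₀, Complex.conj_I]
    field_simp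
    ring_nf
    simp only [Complex.I_sq]
    ring

lemma sector_ev_up (c t κ : ℝ) {z : ℂ} (hz : z ≠ 0) {lo hi : ℝ} (hlo : 0 ≤ lo) (hhi : hi ≤ π)
    (h1 : lo < arg2pi z) (h2 : arg2pi z < hi)
    (Θ₁ Θ₂ : ℝ → ℝ) (f₀ : ℂ → ℂ)
    (hf₀ : ∀ w : ℂ, f₀ w =
      (↑(‖w‖ ^ (1 / c)) : ℂ) * (↑(Θ₁ (arg2pi w)) + ↑(Θ₂ (arg2pi w)) * Complex.I))
    (hkey : ∀ a ∈ Ioo lo hi, Real.cos (κ + t * a) = Θ₁ a ∧ Real.sin (κ + t * a) = Θ₂ a) :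
    z ∈ Complex.slitPlane ∧
    f₀ =ᶠ[nhds z] fun w => Complex.exp ((κ:ℂ) * Complex.I) *
      Complex.exp (↑((1/c + t)/2) * Complex.log w
        + ↑((1/c - t)/2) * (starRingEnd ℂ) (Complex.log w)) := by
  obtain ⟨hsl, hev0⟩ := sector_up hz hlo hhi h1 h2
  refine ⟨hsl, ?_⟩
  filter_upwards [hev0] with w hw
  obtain ⟨hw0, hargmem, harg2⟩ := hw
  obtain ⟨r1, r2⟩ := hkey _ hargmem
  rw [hf₀ w, ← pointwise (1/c) t κ w hw0, harg2, ← r1, ← r2, ← exp_I_eq]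

lemma sector_ev_down (c t κ : ℝ) {z : ℂ} (hz : z ≠ 0) {lo hi : ℝ} (hlo : π ≤ lo) (hhi : hi ≤ 2 * π)
    (h1 : lo < arg2pi z) (h2 : arg2pi z < hi)
    (Θ₁ Θ₂ : ℝ → ℝ) (f₀ : ℂ → ℂ)
    (hf₀ : ∀ w : ℂ, f₀ w =
      (↑(‖w‖ ^ (1 / c)) : ℂ) * (↑(Θ₁ (arg2pi w)) + ↑(Θ₂ (arg2pi w)) * Complex.I))
    (hkey : ∀ a ∈ Ioo (lo - 2 * π) (hi - 2 * π),
      Real.cos (κ + t * a) = Θ₁ (a + 2 * π) ∧ Real.sin (κ + t * a) = Θ₂ (a + 2 * π)) :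
    z ∈ Complex.slitPlane ∧
    f₀ =ᶠ[nhds z] fun w => Complex.exp ((κ:ℂ) * Complex.I) *
      Complex.exp (↑((1/c + t)/2) * Complex.log w
        + ↑((1/c - t)/2) * (starRingEnd ℂ) (Complex.log w)) := by
  obtain ⟨hsl, hev0⟩ := sector_down hz hlo hhi h1 h2
  refine ⟨hsl, ?_⟩
  filter_upwards [hev0] with w hw
  obtain ⟨hw0, hargmem, harg2⟩ := hw
  obtain ⟨r1, r2⟩ := hkey _ hargmem
  rw [hf₀ w, ← pointwise (1/c) t κ w hw0, harg2, ← r1, ← r2, ← exp_I_eq]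

lemma final_alg (p q k : ℝ) (F z : ℂ) (hz : z ≠ 0)
    (hk1 : (1 : ℝ) + k ≠ 0) (hpq : q * (1 + k) = (1 - k) * p) :
    F * (q : ℂ) * ((starRingEnd ℂ) z)⁻¹
      = (((1 - k) / (1 + k) : ℝ) : ℂ) * z * ((starRingEnd ℂ) z)⁻¹ * (F * (p : ℂ) * z⁻¹) := by
  have hk1C : (1 : ℂ) + (k : ℂ) ≠ 0 := by
    have := Complex.ofReal_ne_zero.mpr hk1
    push_cast at this; exact this
  have hpqC : (q : ℂ) * (1 + (k : ℂ)) = (1 - (k : ℂ)) * (p : ℂ) := by exact_mod_cast hpq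
  have hzz : z * z⁻¹ = 1 := mul_inv_cancel₀ hz
  have hcoef : (((1 - k) / (1 + k) : ℝ) : ℂ) * (p : ℂ) = (q : ℂ) := by
    push_cast
    rw [div_mul_eq_mul_div, div_eq_iff hk1C]
    linear_combination -hpqC
  have hre : (((1 - k) / (1 + k) : ℝ) : ℂ) * z * ((starRingEnd ℂ) z)⁻¹ * (F * (p : ℂ) * z⁻¹)
      = (((1 - k) / (1 + k) : ℝ) : ℂ) * (p : ℂ) * F * ((starRingEnd ℂ) z)⁻¹ * (z * z⁻¹) := by
    ring
  rw [hre, hzz, hcoef]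
  ring

/-- Let `M > 1`, `c = 2M/(M+1)`, and let `k₀, Θ₁, Θ₂` be the
`2π`-periodic functions given by the stated piecewise formulas on `[0, 2π)`.
Define `f₀(z) = |z|^{1/c}(Θ₁(arg z) + iΘ₂(arg z))` and
`μ₀(z) = ((1 − k₀(arg z))/(1 + k₀(arg z))) z z̄⁻¹`, with `arg z ∈ [0, 2π)`.
Then for every `z ≠ 0` whose argument does not lie in `{0, cπ/2, π, π + cπ/2}`,
`f₀` is real-differentiable at `z` and `∂̄f₀(z) = μ₀(z) ∂f₀(z)`. -/
theorem sharp_example_beltrami (M c : ℝ) (hM : 1 < M) (hc : c = 2 * M / (M + 1))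
    (Θ₁ Θ₂ k₀ : ℝ → ℝ)
    (hΘ₁per : Function.Periodic Θ₁ (2 * π))
    (hΘ₂per : Function.Periodic Θ₂ (2 * π))
    (hk₀per : Function.Periodic k₀ (2 * π))
    (hk₀1 : ∀ θ ∈ Ico 0 (c * π / 2) ∪ Ico π (π + c * π / 2), k₀ θ = 1)
    (hk₀M : ∀ θ ∈ Ico (0 : ℝ) (2 * π),
      θ ∉ Ico 0 (c * π / 2) ∪ Ico π (π + c * π / 2) → k₀ θ = M)
    (hΘ₁a : ∀ θ ∈ Ico 0 (c * π / 2), Θ₁ θ = sin (c⁻¹ * θ - π / 4))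
    (hΘ₁b : ∀ θ ∈ Ico (c * π / 2) π, Θ₁ θ = cos (c⁻¹ * M * (θ - c * π / 2) - π / 4))
    (hΘ₁c : ∀ θ ∈ Ico π (π + c * π / 2), Θ₁ θ = -sin (c⁻¹ * (θ - π) - π / 4))
    (hΘ₁d : ∀ θ ∈ Ico (π + c * π / 2) (2 * π),
      Θ₁ θ = -cos (c⁻¹ * M * (θ - π - c * π / 2) - π / 4))
    (hΘ₂a : ∀ θ ∈ Ico 0 (c * π / 2), Θ₂ θ = -cos (c⁻¹ * θ - π / 4))
    (hΘ₂b : ∀ θ ∈ Ico (c * π / 2) π, Θ₂ θ = sin (c⁻¹ * M * (θ - c * π / 2) - π / 4))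
    (hΘ₂c : ∀ θ ∈ Ico π (π + c * π / 2), Θ₂ θ = cos (c⁻¹ * (θ - π) - π / 4))
    (hΘ₂d : ∀ θ ∈ Ico (π + c * π / 2) (2 * π),
      Θ₂ θ = -sin (c⁻¹ * M * (θ - π - c * π / 2) - π / 4))
    (f₀ μ₀ : ℂ → ℂ)
    (hf₀ : ∀ z : ℂ, f₀ z =
      (↑(‖z‖ ^ (1 / c)) : ℂ) * (↑(Θ₁ (arg2pi z)) + ↑(Θ₂ (arg2pi z)) * Complex.I))
    (hμ₀ : ∀ z : ℂ, μ₀ z =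
      (((1 - k₀ (arg2pi z)) / (1 + k₀ (arg2pi z)) : ℝ) : ℂ) * z * (starRingEnd ℂ z)⁻¹) :
    ∀ z : ℂ, z ≠ 0 →
      arg2pi z ≠ 0 → arg2pi z ≠ c * π / 2 → arg2pi z ≠ π → arg2pi z ≠ π + c * π / 2 →
      DifferentiableAt ℝ f₀ z ∧ wirtingerBar f₀ z = μ₀ z * wirtinger f₀ z := by
  have hM0 : (0:ℝ) < M := by linarith
  have hM1 : (0:ℝ) < M + 1 := by linarith
  have hc0 : 0 < c := by rw [hc]; positivity
  have hc2 : c < 2 := by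
    rw [hc, div_lt_iff₀ hM1]; linarith
  have hπ := Real.pi_pos
  have hA0 : 0 < c * π / 2 := by positivity
  have hAπ : c * π / 2 < π := by nlinarith
  have hC2 : π + c * π / 2 < 2 * π := by nlinarith
  have hcne : c ≠ 0 := hc0.ne'
  have hcC : ((c:ℝ):ℂ) ≠ 0 := Complex.ofReal_ne_zero.mpr hcne
  have h1M : (0:ℝ) < 1 + M := by linarith
  have h1MC : (1:ℂ) + (M:ℝ) ≠ 0 := by
    have : ((1 + M : ℝ):ℂ) ≠ 0 := Complex.ofReal_ne_zero.mpr h1M.ne'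
    push_cast at this; exact this
  intro z hz h0 hA hB hC
  have hθ0 : 0 < arg2pi z := (arg2pi_nonneg z).lt_of_ne (Ne.symm h0)
  have hθ2 : arg2pi z < 2 * π := arg2pi_lt z
  have hczC : (starRingEnd ℂ) z ≠ 0 := by simp [hz]
  rcases lt_or_gt_of_ne hA with hA1 | hA2
  · -- sector 1
    have hkey : ∀ a ∈ Ioo (0:ℝ) (c * π / 2),
        Real.cos (-(3*π/4) + c⁻¹ * a) = Θ₁ a ∧ Real.sin (-(3*π/4) + c⁻¹ * a) = Θ₂ a := by
      intro a ha
      have hmem : a ∈ Ico 0 (c * π / 2) := ⟨ha.1.le, ha.2⟩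
      rw [hΘ₁a a hmem, hΘ₂a a hmem,
        show -(3*π/4) + c⁻¹ * a = (c⁻¹ * a - π/4) - π/2 by ring]
      constructor
      · simp [Real.cos_sub]
      · simp [Real.sin_sub]
    obtain ⟨hsl, hev⟩ := sector_ev_up c c⁻¹ (-(3*π/4)) hz le_rfl hAπ.le hθ0 hA1 Θ₁ Θ₂ f₀ hf₀ hkey
    obtain ⟨hdiff, hbar, hwir⟩ := master ((1/c + c⁻¹)/2) ((1/c - c⁻¹)/2) _ z hsl hz f₀ hev
    have hk : k₀ (arg2pi z) = 1 := hk₀1 _ (Or.inl ⟨arg2pi_nonneg z, hA1⟩)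
    refine ⟨hdiff, ?_⟩
    rw [hbar, hwir, hμ₀ z, hk]
    exact final_alg _ _ _ _ _ hz (by norm_num) (by norm_num [one_div])
  · rcases lt_or_gt_of_ne hB with hB1 | hB2
    · -- sector 2
      have hkey : ∀ a ∈ Ioo (c * π / 2) π,
          Real.cos (-(M*π/2) - π/4 + c⁻¹ * M * a) = Θ₁ a ∧
          Real.sin (-(M*π/2) - π/4 + c⁻¹ * M * a) = Θ₂ a := by
        intro a ha
        have hmem : a ∈ Ico (c * π / 2) π := ⟨ha.1.le, ha.2⟩
        rw [hΘ₁b a hmem, hΘ₂b a hmem,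
          show -(M*π/2) - π/4 + c⁻¹ * M * a = c⁻¹ * M * (a - c * π / 2) - π/4 by
            field_simp; ring]
        exact ⟨rfl, rfl⟩
      obtain ⟨hsl, hev⟩ := sector_ev_up c (c⁻¹ * M) (-(M*π/2) - π/4) hz hA0.le le_rfl hA2 hB1
        Θ₁ Θ₂ f₀ hf₀ hkey
      obtain ⟨hdiff, hbar, hwir⟩ :=
        master ((1/c + c⁻¹ * M)/2) ((1/c - c⁻¹ * M)/2) _ z hsl hz f₀ hev
      have hk : k₀ (arg2pi z) = M := by
        apply hk₀M _ ⟨arg2pi_nonneg z, hθ2⟩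
        rintro (⟨-, h2⟩ | ⟨h1, -⟩) <;> linarith
      refine ⟨hdiff, ?_⟩
      rw [hbar, hwir, hμ₀ z, hk]
      exact final_alg _ _ _ _ _ hz (by linarith) (by field_simp)
    · rcases lt_or_gt_of_ne hC with hC1 | hC2'
      · -- sector 3
        have hkey : ∀ a ∈ Ioo (π - 2 * π) (π + c * π / 2 - 2 * π),
            Real.cos (c⁻¹*π + π/4 + c⁻¹ * a) = Θ₁ (a + 2 * π) ∧
            Real.sin (c⁻¹*π + π/4 + c⁻¹ * a) = Θ₂ (a + 2 * π) := by
          intro a ha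
          have hmem : a + 2 * π ∈ Ico π (π + c * π / 2) :=
            ⟨by linarith [ha.1], by linarith [ha.2]⟩
          rw [hΘ₁c _ hmem, hΘ₂c _ hmem,
            show c⁻¹*π + π/4 + c⁻¹ * a = (c⁻¹ * ((a + 2*π) - π) - π/4) + π/2 by ring]
          constructor
          · simp [Real.cos_add]
          · simp [Real.sin_add]
        obtain ⟨hsl, hev⟩ := sector_ev_down c c⁻¹ (c⁻¹*π + π/4) hz le_rfl hC2.le hB2 hC1
          Θ₁ Θ₂ f₀ hf₀ hkey
        obtain ⟨hdiff, hbar, hwir⟩ := master ((1/c + c⁻¹)/2) ((1/c - c⁻¹)/2) _ z hsl hz f₀ hev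
        have hk : k₀ (arg2pi z) = 1 := hk₀1 _ (Or.inr ⟨hB2.le, hC1⟩)
        refine ⟨hdiff, ?_⟩
        rw [hbar, hwir, hμ₀ z, hk]
        exact final_alg _ _ _ _ _ hz (by norm_num) (by norm_num [one_div])
      · -- sector 4
        have hkey : ∀ a ∈ Ioo (π + c * π / 2 - 2 * π) (2 * π - 2 * π),
            Real.cos (c⁻¹*M*π - M*π/2 - π/4 + π + c⁻¹ * M * a) = Θ₁ (a + 2 * π) ∧
            Real.sin (c⁻¹*M*π - M*π/2 - π/4 + π + c⁻¹ * M * a) = Θ₂ (a + 2 * π) := by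
          intro a ha
          have hmem : a + 2 * π ∈ Ico (π + c * π / 2) (2 * π) :=
            ⟨by linarith [ha.1], by linarith [ha.2]⟩
          rw [hΘ₁d _ hmem, hΘ₂d _ hmem,
            show c⁻¹*M*π - M*π/2 - π/4 + π + c⁻¹ * M * a
                = (c⁻¹ * M * ((a + 2*π) - π - c * π / 2) - π/4) + π by
              field_simp; ring]
          constructor
          · simp [Real.cos_add]
          · simp [Real.sin_add]
        obtain ⟨hsl, hev⟩ := sector_ev_down c (c⁻¹ * M) (c⁻¹*M*π - M*π/2 - π/4 + π) hz
          (by linarith) le_rfl hC2' hθ2 Θ₁ Θ₂ f₀ hf₀ hkey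
        obtain ⟨hdiff, hbar, hwir⟩ :=
          master ((1/c + c⁻¹ * M)/2) ((1/c - c⁻¹ * M)/2) _ z hsl hz f₀ hev
        have hk : k₀ (arg2pi z) = M := by
          apply hk₀M _ ⟨arg2pi_nonneg z, hθ2⟩
          rintro (⟨-, h2⟩ | ⟨-, h2⟩) <;> linarith
        refine ⟨hdiff, ?_⟩
        rw [hbar, hwir, hμ₀ z, hk]
        exact final_alg _ _ _ _ _ hz (by linarith) (by field_simp)
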